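/- Stability of the soft c-transform in the oscillation seminorm: with D_c as above and f = T_ν(g) for some g ∈ L∞(Y), and μ, μ̃ probability measures on X, define T_μ(f)(y) = −ε log ∫_X exp((f(x) − c(x,y))/ε) μ(dx). Then the oscillation seminorm ‖h‖_var := sup h − inf h satisfies ‖T_μ̃(f) − T_μ(f)‖_var ≤ 2ε·e^{2D_c/ε}·‖μ − μ̃‖_TV. -/

import Mathlib

open MeasureTheory Real

/- The oscillation seminorm `‖h‖_var = sup h − inf h`. -/
noncomputable def oscVar {α : Type*} (h : α → ℝ) : ℝ :=
  sSup (Set.range h) - sInf (Set.range h)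

/- Total variation distance between two finite measures. -/
noncomputable def tvDist {α : Type*} [MeasurableSpace α]
    (μ ν : Measure α) [IsFiniteMeasure μ] [IsFiniteMeasure ν] : ℝ :=
  ((μ.toSignedMeasure - ν.toSignedMeasure).totalVariation Set.univ).toReal

lemma integrable_of_bdd {α : Type*} [MeasurableSpace α] (μ : Measure α) [IsFiniteMeasure μ]
    {φ : α → ℝ} (hm : Measurable φ) (C : ℝ) (hb : ∀ a, |φ a| ≤ C) : Integrable φ μ :=
  (integrable_const C).mono' hm.aestronglyMeasurable (ae_of_all _ hb)

lemma tvDist_symm {α : Type*} [MeasurableSpace α]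
    (μ ν : Measure α) [IsFiniteMeasure μ] [IsFiniteMeasure ν] :
    tvDist μ ν = tvDist ν μ := by
  unfold tvDist
  rw [← MeasureTheory.SignedMeasure.totalVariation_neg, neg_sub]

lemma measure_add_neg_eq {α : Type*} [MeasurableSpace α]
    (μ μt : Measure α) [IsFiniteMeasure μ] [IsFiniteMeasure μt] :
    μ + (μ.toSignedMeasure - μt.toSignedMeasure).toJordanDecomposition.negPart
      = μt + (μ.toSignedMeasure - μt.toSignedMeasure).toJordanDecomposition.posPart := by
  set s := μ.toSignedMeasure - μt.toSignedMeasure with hs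
  ext A hA
  have hspec := s.toSignedMeasure_toJordanDecomposition
  have h1 : s A = (s.toJordanDecomposition.posPart A).toReal
      - (s.toJordanDecomposition.negPart A).toReal := by
    conv_lhs => rw [← hspec]
    simp [JordanDecomposition.toSignedMeasure, Measure.toSignedMeasure_apply_measurable hA, hA]
    rfl
  have h2 : s A = (μ A).toReal - (μt A).toReal := by
    rw [hs]
    simp [Measure.toSignedMeasure_apply_measurable hA, hA]
    rfl
  have key : (μ A).toReal + (s.toJordanDecomposition.negPart A).toReal
      = (μt A).toReal + (s.toJordanDecomposition.posPart A).toReal := by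
    rw [h2] at h1; linarith
  rw [Measure.add_apply, Measure.add_apply]
  rw [← ENNReal.toReal_add (measure_ne_top _ _) (measure_ne_top _ _)] at key
  rw [← ENNReal.toReal_add (measure_ne_top _ _) (measure_ne_top _ _)] at key
  exact (ENNReal.toReal_eq_toReal_iff' (by finiteness) (by finiteness)).mp key

lemma integral_diff_le_tv {α : Type*} [MeasurableSpace α] [Nonempty α]
    (μ μt : Measure α) [IsProbabilityMeasure μ] [IsProbabilityMeasure μt]
    {φ : α → ℝ} (hm : Measurable φ) {C : ℝ} (h0 : ∀ a, 0 ≤ φ a) (hC : ∀ a, φ a ≤ C) :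
    ∫ a, φ a ∂μ - ∫ a, φ a ∂μt ≤ C * tvDist μ μt := by
  set s := μ.toSignedMeasure - μt.toSignedMeasure with hs
  set p := s.toJordanDecomposition.posPart
  set n := s.toJordanDecomposition.negPart
  have hb : ∀ a, |φ a| ≤ C := fun a => by rw [abs_of_nonneg (h0 a)]; exact hC a
  have hCnn : 0 ≤ C := le_trans (h0 (Classical.arbitrary α)) (hC _)
  have heq := measure_add_neg_eq μ μt
  have hint : ∀ (m : Measure α) [IsFiniteMeasure m], Integrable φ m := fun m _ =>
    integrable_of_bdd m hm C hb
  have h1 : ∫ a, φ a ∂μ + ∫ a, φ a ∂n = ∫ a, φ a ∂μt + ∫ a, φ a ∂p := by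
    rw [← integral_add_measure (hint μ) (hint n), ← integral_add_measure (hint μt) (hint p), heq]
  have h2 : ∫ a, φ a ∂p ≤ C * (p Set.univ).toReal := by
    calc ∫ a, φ a ∂p ≤ ∫ _, C ∂p := integral_mono (hint p) (integrable_const C) hC
    _ = (p Set.univ).toReal * C := by simp [integral_const]; exact Or.inl rfl
    _ = C * (p Set.univ).toReal := mul_comm _ _
  have h3 : 0 ≤ ∫ a, φ a ∂n := integral_nonneg h0
  have htv : (p Set.univ).toReal ≤ tvDist μ μt := by
    unfold tvDist
    rw [← hs]
    have : s.totalVariation = p + n := rfl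
    rw [this, Measure.add_apply, ENNReal.toReal_add (measure_ne_top _ _) (measure_ne_top _ _)]
    have := ENNReal.toReal_nonneg (a := n Set.univ)
    linarith
  have : ∫ a, φ a ∂μ - ∫ a, φ a ∂μt = ∫ a, φ a ∂p - ∫ a, φ a ∂n := by linarith
  rw [this]
  calc ∫ a, φ a ∂p - ∫ a, φ a ∂n ≤ ∫ a, φ a ∂p := by linarith
  _ ≤ C * (p Set.univ).toReal := h2
  _ ≤ C * tvDist μ μt := by apply mul_le_mul_of_nonneg_left htv hCnn

/-- Stability of the soft c-transform in the oscillation seminorm: with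
`Dc` bounding half the twist of the bounded cost `c`, `f = T_ν g` a soft `c`-transform,
and `T_μ(f)(y) = −ε log ∫ exp((f(x) − c(x,y))/ε) dμ(x)`, one has
`‖T_μ̃(f) − T_μ(f)‖_var ≤ 2ε·e^{2Dc/ε}·‖μ − μ̃‖_TV`. -/
theorem soft_c_transform_stability
    {X Y : Type*} [MeasurableSpace X] [MeasurableSpace Y] [Nonempty X] [Nonempty Y]
    (ν : Measure Y) [IsProbabilityMeasure ν]
    (μ μt : Measure X) [IsProbabilityMeasure μ] [IsProbabilityMeasure μt]
    (c : X → Y → ℝ) (hc_meas : Measurable (Function.uncurry c))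
    (Mc : ℝ) (hc_bdd : ∀ x y, |c x y| ≤ Mc)
    (g : Y → ℝ) (hg_meas : Measurable g)
    (Mg : ℝ) (hg_bdd : ∀ y, |g y| ≤ Mg)
    (ε : ℝ) (hε : 0 < ε)
    (Dc : ℝ)
    (hDc : ∀ x x' y y', c x y + c x' y' - c x y' - c x' y ≤ 2 * Dc)
    (f : X → ℝ) (hf_meas : Measurable f)
    (hf : ∀ x, f x = -ε * log (∫ y, exp ((g y - c x y) / ε) ∂ν)) :
    oscVar (fun y =>
        (-ε * log (∫ x, exp ((f x - c x y) / ε) ∂μt))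
          - (-ε * log (∫ x, exp ((f x - c x y) / ε) ∂μ)))
      ≤ 2 * ε * exp (2 * Dc / ε) * tvDist μ μt := by
  have hcx : ∀ x, Measurable (fun y => c x y) :=
    fun x => hc_meas.comp (measurable_const.prodMk measurable_id)
  have hcy : ∀ y, Measurable (fun x => c x y) :=
    fun y => hc_meas.comp (measurable_id.prodMk measurable_const)
  set tv := tvDist μ μt with htvdef
  have htv0 : 0 ≤ tv := ENNReal.toReal_nonneg
  set Mf : ℝ := Mg + Mc with hMf
  -- integrand for A x
  set A : X → ℝ := fun x => ∫ y, exp ((g y - c x y) / ε) ∂ν with hA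
  have hA_meas : ∀ x, Measurable (fun y => exp ((g y - c x y) / ε)) :=
    fun x => Real.measurable_exp.comp ((hg_meas.sub (hcx x)).div_const ε)
  have hA_ub : ∀ x y, exp ((g y - c x y) / ε) ≤ exp (Mf / ε) := by
    intro x y
    apply exp_le_exp.mpr
    apply div_le_div_of_nonneg_right _ hε.le
    have h1 := abs_le.mp (hg_bdd y)
    have h2 := abs_le.mp (hc_bdd x y)
    rw [hMf]; linarith [h1.2, h2.1]
  have hA_lb : ∀ x y, exp (-Mf / ε) ≤ exp ((g y - c x y) / ε) := by
    intro x y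
    apply exp_le_exp.mpr
    apply div_le_div_of_nonneg_right _ hε.le
    have h1 := abs_le.mp (hg_bdd y)
    have h2 := abs_le.mp (hc_bdd x y)
    rw [hMf]; linarith [h1.1, h2.2]
  have hA_int : ∀ x, Integrable (fun y => exp ((g y - c x y) / ε)) ν := by
    intro x
    apply integrable_of_bdd ν (hA_meas x) (exp (Mf / ε))
    intro y
    rw [abs_of_nonneg (exp_pos _).le]
    exact hA_ub x y
  have hA_pos : ∀ x, exp (-Mf / ε) ≤ A x := by
    intro x
    calc exp (-Mf / ε) = ∫ _, exp (-Mf / ε) ∂ν := by simp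
    _ ≤ A x := integral_mono (integrable_const _) (hA_int x) (hA_lb x)
  -- oscillation bound on x ↦ f x - c x y
  have hosc : ∀ x x' y, f x - c x y - (f x' - c x' y) ≤ 2 * Dc := by
    intro x x' y
    have hApos : 0 < A x' := lt_of_lt_of_le (exp_pos _) (hA_pos x')
    have hApos' : 0 < A x := lt_of_lt_of_le (exp_pos _) (hA_pos x)
    have hpw : ∀ y', exp ((g y' - c x' y') / ε)
        ≤ exp ((c x y - c x' y + 2 * Dc) / ε) * exp ((g y' - c x y') / ε) := by
      intro y'
      rw [← exp_add, ← add_div]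
      apply exp_le_exp.mpr
      apply div_le_div_of_nonneg_right _ hε.le
      have := hDc x x' y' y
      linarith
    have hint : A x' ≤ exp ((c x y - c x' y + 2 * Dc) / ε) * A x := by
      calc A x' ≤ ∫ y', exp ((c x y - c x' y + 2 * Dc) / ε) * exp ((g y' - c x y') / ε) ∂ν :=
        integral_mono (hA_int x') ((hA_int x).const_mul _) hpw
      _ = exp ((c x y - c x' y + 2 * Dc) / ε) * A x := integral_const_mul _ _
    have hlog : log (A x') ≤ (c x y - c x' y + 2 * Dc) / ε + log (A x) := by
      calc log (A x') ≤ log (exp ((c x y - c x' y + 2 * Dc) / ε) * A x) :=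
        Real.log_le_log hApos hint
      _ = (c x y - c x' y + 2 * Dc) / ε + log (A x) := by
        rw [Real.log_mul (exp_ne_zero _) (ne_of_gt hApos'), Real.log_exp]
    have hmul := mul_le_mul_of_nonneg_left hlog hε.le
    have hfA : ∀ z, f z = -ε * log (A z) := hf
    rw [hfA x, hfA x']
    have hde : ε * ((c x y - c x' y + 2 * Dc) / ε + log (A x))
        = (c x y - c x' y + 2 * Dc) + ε * log (A x) := by
      field_simp
    rw [hde] at hmul
    linarith
  -- bound on f
  have hf_bdd : ∀ x, |f x| ≤ Mf := by
    intro x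
    have h1 : A x ≤ exp (Mf / ε) := by
      calc A x ≤ ∫ _, exp (Mf / ε) ∂ν := integral_mono (hA_int x) (integrable_const _) (hA_ub x)
      _ = exp (Mf / ε) := by simp
    have h2 := hA_pos x
    have hl1 : log (A x) ≤ Mf / ε := by
      calc log (A x) ≤ log (exp (Mf / ε)) :=
        Real.log_le_log (lt_of_lt_of_le (exp_pos _) h2) h1
      _ = Mf / ε := Real.log_exp _
    have hl2 : -Mf / ε ≤ log (A x) := by
      calc -Mf / ε = log (exp (-Mf / ε)) := (Real.log_exp _).symm
      _ ≤ log (A x) := Real.log_le_log (exp_pos _) h2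
    have hfA : ∀ z, f z = -ε * log (A z) := hf
    rw [hfA x, abs_le]
    constructor
    · have := mul_le_mul_of_nonneg_left hl1 hε.le
      rw [mul_div_cancel₀ _ (ne_of_gt hε)] at this
      linarith
    · have := mul_le_mul_of_nonneg_left hl2 hε.le
      rw [div_eq_mul_inv, neg_mul, ← div_eq_mul_inv, mul_neg, mul_div_cancel₀ _ (ne_of_gt hε)] at this
      linarith
  -- per-y bound
  set K : ℝ := ε * exp (2 * Dc / ε) * tv with hK
  have key : ∀ y, |(-ε * log (∫ x, exp ((f x - c x y) / ε) ∂μt))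
      - (-ε * log (∫ x, exp ((f x - c x y) / ε) ∂μ))| ≤ K := by
    intro y
    set φ : X → ℝ := fun x => exp ((f x - c x y) / ε) with hφ
    have hφ_meas : Measurable φ := Real.measurable_exp.comp ((hf_meas.sub (hcy y)).div_const ε)
    -- sup of f x - c x y
    have hbddA : BddAbove (Set.range fun x => f x - c x y) := by
      refine ⟨Mf + Mc, ?_⟩
      rintro _ ⟨x, rfl⟩
      have := abs_le.mp (hf_bdd x)
      have := abs_le.mp (hc_bdd x y)
      dsimp; linarith [(abs_le.mp (hf_bdd x)).2, (abs_le.mp (hc_bdd x y)).1]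
    set s : ℝ := sSup (Set.range fun x => f x - c x y) with hsdef
    have hle : ∀ x, f x - c x y ≤ s := fun x => le_csSup hbddA ⟨x, rfl⟩
    have hge : ∀ x, s - 2 * Dc ≤ f x - c x y := by
      intro x
      have : s ≤ f x - c x y + 2 * Dc := by
        apply csSup_le (Set.range_nonempty _)
        rintro _ ⟨x', rfl⟩
        dsimp only
        linarith [hosc x' x y]
      linarith
    set C : ℝ := exp (s / ε) with hC
    set L : ℝ := exp ((s - 2 * Dc) / ε) with hL
    have hφC : ∀ x, φ x ≤ C := fun x =>
      exp_le_exp.mpr (div_le_div_of_nonneg_right (hle x) hε.le)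
    have hφL : ∀ x, L ≤ φ x := fun x =>
      exp_le_exp.mpr (div_le_div_of_nonneg_right (hge x) hε.le)
    have hφ0 : ∀ x, 0 ≤ φ x := fun x => (exp_pos _).le
    have hφ_int : ∀ (m : Measure X) [IsProbabilityMeasure m], Integrable φ m := by
      intro m _
      apply integrable_of_bdd m hφ_meas C
      intro x; rw [abs_of_nonneg (hφ0 x)]; exact hφC x
    set I : ℝ := ∫ x, φ x ∂μ with hI
    set It : ℝ := ∫ x, φ x ∂μt with hIt
    have hIL : L ≤ I := by
      calc L = ∫ _, L ∂μ := by simp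
      _ ≤ I := integral_mono (integrable_const _) (hφ_int μ) hφL
    have hItL : L ≤ It := by
      calc L = ∫ _, L ∂μt := by simp
      _ ≤ It := integral_mono (integrable_const _) (hφ_int μt) hφL
    have hIpos : 0 < I := lt_of_lt_of_le (exp_pos _) hIL
    have hItpos : 0 < It := lt_of_lt_of_le (exp_pos _) hItL
    have hCL : C = exp (2 * Dc / ε) * L := by
      rw [hC, hL, ← exp_add]
      congr 1
      field_simp
      ring
    -- |It - I| bounds via tv
    have hd1 : It - I ≤ C * tv := by
      have := integral_diff_le_tv μt μ hφ_meas hφ0 hφC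
      rwa [tvDist_symm, ← htvdef] at this
    have hd2 : I - It ≤ C * tv := by
      have := integral_diff_le_tv μ μt hφ_meas hφ0 hφC
      rwa [← htvdef] at this
    -- log bounds
    have hlog1 : log It - log I ≤ exp (2 * Dc / ε) * tv := by
      have h1 : log It - log I ≤ It / I - 1 := by
        rw [← Real.log_div (ne_of_gt hItpos) (ne_of_gt hIpos)]
        exact Real.log_le_sub_one_of_pos (div_pos hItpos hIpos)
      have h2 : It / I - 1 = (It - I) / I := by field_simp
      have h3 : (It - I) / I ≤ exp (2 * Dc / ε) * tv := by
        rw [div_le_iff₀ hIpos]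
        have hm : exp (2 * Dc / ε) * tv * L ≤ exp (2 * Dc / ε) * tv * I :=
          mul_le_mul_of_nonneg_left hIL (mul_nonneg (exp_pos _).le htv0)
        have hCtv : C * tv = exp (2 * Dc / ε) * tv * L := by rw [hCL]; ring
        linarith
      linarith
    have hlog2 : log I - log It ≤ exp (2 * Dc / ε) * tv := by
      have h1 : log I - log It ≤ I / It - 1 := by
        rw [← Real.log_div (ne_of_gt hIpos) (ne_of_gt hItpos)]
        exact Real.log_le_sub_one_of_pos (div_pos hIpos hItpos)
      have h2 : I / It - 1 = (I - It) / It := by field_simp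
      have h3 : (I - It) / It ≤ exp (2 * Dc / ε) * tv := by
        rw [div_le_iff₀ hItpos]
        have hm : exp (2 * Dc / ε) * tv * L ≤ exp (2 * Dc / ε) * tv * It :=
          mul_le_mul_of_nonneg_left hItL (mul_nonneg (exp_pos _).le htv0)
        have hCtv : C * tv = exp (2 * Dc / ε) * tv * L := by rw [hCL]; ring
        linarith
      linarith
    have hgI : (∫ x, exp ((f x - c x y) / ε) ∂μ) = I := rfl
    have hgIt : (∫ x, exp ((f x - c x y) / ε) ∂μt) = It := rfl
    have habs : |log I - log It| ≤ exp (2 * Dc / ε) * tv :=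
      abs_le.mpr ⟨by linarith, hlog2⟩
    calc |-ε * log It - -ε * log I| = ε * |log I - log It| := by
          rw [show (-ε * log It - -ε * log I) = ε * (log I - log It) by ring,
            abs_mul, abs_of_pos hε]
    _ ≤ ε * (exp (2 * Dc / ε) * tv) := mul_le_mul_of_nonneg_left habs hε.le
    _ = K := by rw [hK]; ring
  -- conclude oscillation bound
  unfold oscVar
  have hne : (Set.range fun y =>
      (-ε * log (∫ x, exp ((f x - c x y) / ε) ∂μt))
        - (-ε * log (∫ x, exp ((f x - c x y) / ε) ∂μ))).Nonempty := Set.range_nonempty _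
  have hub : sSup (Set.range fun y =>
      (-ε * log (∫ x, exp ((f x - c x y) / ε) ∂μt))
        - (-ε * log (∫ x, exp ((f x - c x y) / ε) ∂μ))) ≤ K := by
    apply csSup_le hne
    rintro _ ⟨y, rfl⟩
    exact (abs_le.mp (key y)).2
  have hlb : -K ≤ sInf (Set.range fun y =>
      (-ε * log (∫ x, exp ((f x - c x y) / ε) ∂μt))
        - (-ε * log (∫ x, exp ((f x - c x y) / ε) ∂μ))) := by
    apply le_csInf hne
    rintro _ ⟨y, rfl⟩
    exact (abs_le.mp (key y)).1
  have hK2 : 2 * ε * exp (2 * Dc / ε) * tv = K + K := by rw [hK]; ring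
  rw [hK2]
  linarith
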